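/- arXiv:1905.11195 — 5 statements merged into one kernel-verified Lean document; each statement's English description precedes it below -/
import Mathlib

section
/- With the data below, for every integer j with 0 ≤ |j| ≤ m+1 the limit lim_{n→∞} u_{n,j} exists and equals U_{|j|}, where: if |j| = 2l then U_{|j|} = Σ_{p=max{l,1}}^{⌊(m+1)/2⌋} (d_{2p−1}/(2p)) · C(2p, p−l) · 2^{−2p}, and if |j| = 2l+1 then U_{|j|} = Σ_{p=l}^{⌊m/2⌋} (d_{2p}/(2p+1)) · C(2p+1, p−l) · 2^{−(2p+1)} (C denotes the binomial coefficient). -/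
open Finset Filter Topology

/-- Value of the coefficients `s` when nonzero, expressed via `natAbs`. -/
lemma sVal_aux (k : ℕ) (j : ℤ) (h1 : j.natAbs ≤ k) (h2 : Even ((k : ℤ) - j)) :
    (k.choose ((((k : ℤ) - j).toNat) / 2) : ℕ) = k.choose ((k - j.natAbs) / 2) := by
  obtain ⟨t, ht⟩ := h2
  rcases le_or_gt 0 j with hj | hj
  · congr 1
    omega
  · have ha : (((k : ℤ) - j).toNat) / 2 = (k + j.natAbs) / 2 := by omega
    rw [ha]
    have h3 : (k + j.natAbs) / 2 ≤ k := by omega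
    rw [← Nat.choose_symm h3]
    congr 1
    omega

/-- Combinatorial reindexing, even case. -/
lemma sum_reindex_even (m : ℕ) (d : ℕ → ℝ) (s : ℕ → ℤ → ℝ)
    (hs : ∀ (k : ℕ) (j : ℤ), s k j =
      if |j| ≤ (k : ℤ) ∧ Even ((k : ℤ) - j) then
        (k.choose (((k : ℤ) - j).toNat / 2) : ℝ) / 2 ^ k
      else 0)
    (j : ℤ) (hjev : Even j) :
    ∑ k ∈ Finset.Icc 1 (m + 1), d (k - 1) / (k : ℝ) * s k j =
      ∑ p ∈ Finset.Icc (max (j.natAbs / 2) 1) ((m + 1) / 2),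
        d (2 * p - 1) / (2 * p) * ((2 * p).choose (p - j.natAbs / 2) : ℝ) / 2 ^ (2 * p) := by
  classical
  have haev : Even j.natAbs := Int.natAbs_even.mpr hjev
  obtain ⟨l, hl⟩ := haev
  rw [← Finset.sum_filter_of_ne (p := fun k => Even k ∧ j.natAbs ≤ k) ?_]
  · refine Finset.sum_nbij' (fun k => k / 2) (fun p => 2 * p) ?_ ?_ ?_ ?_ ?_
    · intro k hk
      simp only [Finset.mem_filter, Finset.mem_Icc] at hk
      obtain ⟨⟨hk1, hk2⟩, hkev, hka⟩ := hk
      obtain ⟨p, hp⟩ := hkev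
      simp only [Finset.mem_Icc]
      omega
    · intro p hp
      simp only [Finset.mem_Icc] at hp
      simp only [Finset.mem_filter, Finset.mem_Icc]
      refine ⟨⟨by omega, by omega⟩, ⟨p, by omega⟩, by omega⟩
    · intro k hk
      simp only [Finset.mem_filter, Finset.mem_Icc] at hk
      obtain ⟨_, hkev, _⟩ := hk
      obtain ⟨p, hp⟩ := hkev
      omega
    · intro p hp
      omega
    · intro k hk
      simp only [Finset.mem_filter, Finset.mem_Icc] at hk
      obtain ⟨⟨hk1, hk2⟩, hkev, hka⟩ := hk
      obtain ⟨p, hp⟩ := hkev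
      have hkp : k = 2 * p := by omega
      have hk2p : k / 2 = p := by omega
      have hcond : |j| ≤ (k : ℤ) ∧ Even ((k : ℤ) - j) := by
        constructor
        · rw [Int.abs_eq_natAbs]; exact_mod_cast hka
        · rw [Int.even_sub]
          constructor
          · intro _; exact hjev
          · intro _; exact (Int.even_coe_nat k).mpr ⟨p, by omega⟩
      rw [hs, if_pos hcond, sVal_aux k j hka hcond.2]
      have hidx : (k - j.natAbs) / 2 = p - j.natAbs / 2 := by omega
      rw [hk2p, hidx, hkp]
      push_cast
      ring
  · intro k hk hne
    by_contra hP
    apply hne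
    have : s k j = 0 := by
      rw [hs, if_neg]
      intro ⟨hc1, hc2⟩
      apply hP
      constructor
      · rw [Int.even_sub] at hc2
        have : Even ((k : ℤ)) := hc2.mpr hjev
        exact (Int.even_coe_nat k).mp this
      · rw [Int.abs_eq_natAbs] at hc1
        exact_mod_cast hc1
    rw [this, mul_zero]

/-- Combinatorial reindexing, odd case. -/
lemma sum_reindex_odd (m : ℕ) (d : ℕ → ℝ) (s : ℕ → ℤ → ℝ)
    (hs : ∀ (k : ℕ) (j : ℤ), s k j =
      if |j| ≤ (k : ℤ) ∧ Even ((k : ℤ) - j) then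
        (k.choose (((k : ℤ) - j).toNat / 2) : ℝ) / 2 ^ k
      else 0)
    (j : ℤ) (hjodd : ¬ Even j) :
    ∑ k ∈ Finset.Icc 1 (m + 1), d (k - 1) / (k : ℝ) * s k j =
      ∑ p ∈ Finset.Icc (j.natAbs / 2) (m / 2),
        d (2 * p) / (2 * p + 1) * ((2 * p + 1).choose (p - j.natAbs / 2) : ℝ)
          / 2 ^ (2 * p + 1) := by
  classical
  have haodd : ¬ Even j.natAbs := fun h => hjodd (Int.natAbs_even.mp h)
  rw [Nat.not_even_iff] at haodd
  rw [← Finset.sum_filter_of_ne (p := fun k => ¬ Even k ∧ j.natAbs ≤ k) ?_]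
  · refine Finset.sum_nbij' (fun k => k / 2) (fun p => 2 * p + 1) ?_ ?_ ?_ ?_ ?_
    · intro k hk
      simp only [Finset.mem_filter, Finset.mem_Icc, Nat.not_even_iff] at hk
      simp only [Finset.mem_Icc]
      omega
    · intro p hp
      simp only [Finset.mem_Icc] at hp
      simp only [Finset.mem_filter, Finset.mem_Icc, Nat.not_even_iff]
      omega
    · intro k hk
      simp only [Finset.mem_filter, Finset.mem_Icc, Nat.not_even_iff] at hk
      omega
    · intro p hp
      omega
    · intro k hk
      simp only [Finset.mem_filter, Finset.mem_Icc, Nat.not_even_iff] at hk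
      obtain ⟨⟨hk1, hk2⟩, hkodd, hka⟩ := hk
      have hkp : k = 2 * (k / 2) + 1 := by omega
      have hcond : |j| ≤ (k : ℤ) ∧ Even ((k : ℤ) - j) := by
        constructor
        · rw [Int.abs_eq_natAbs]; exact_mod_cast hka
        · rw [Int.even_sub]
          constructor
          · intro hke
            exfalso
            have : Even k := (Int.even_coe_nat k).mp hke
            rw [Nat.even_iff] at this
            omega
          · intro hje; exact absurd hje hjodd
      rw [hs, if_pos hcond, sVal_aux k j hka hcond.2]
      have hidx : (k - j.natAbs) / 2 = k / 2 - j.natAbs / 2 := by omega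
      have hkm1 : k - 1 = 2 * (k / 2) := by omega
      rw [hidx, hkm1]
      rw [show (k : ℝ) = 2 * ((k / 2 : ℕ) : ℝ) + 1 by exact_mod_cast hkp]
      rw [show (2 : ℝ) ^ k = 2 ^ (2 * (k / 2) + 1) by rw [← hkp]]
      rw [show k.choose (k / 2 - j.natAbs / 2)
            = (2 * (k / 2) + 1).choose (k / 2 - j.natAbs / 2) by rw [← hkp]]
      ring
  · intro k hk hne
    by_contra hP
    apply hne
    have : s k j = 0 := by
      rw [hs, if_neg]
      intro ⟨hc1, hc2⟩
      apply hP
      constructor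
      · rw [Int.even_sub] at hc2
        intro hke
        exact hjodd (hc2.mp ((Int.even_coe_nat k).mpr hke))
      · rw [Int.abs_eq_natAbs] at hc1
        exact_mod_cast hc1
    rw [this, mul_zero]

theorem X1Jacobi_recurrence_coefficients_limit
    (m : ℕ) (hm : 1 ≤ m)
    (d c : ℕ → ℝ) (α β : ℝ) (hα : -1 < α) (hβ : -1 < β)
    (lam : ℤ → ℝ) (hlam : ∀ n : ℤ, lam n = n * (n + α + β + 1))
    (tlam : ℝ) (htlam : ∀ n : ℤ, tlam ≠ lam n)
    (s : ℕ → ℤ → ℝ)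
    (hs : ∀ (k : ℕ) (j : ℤ), s k j =
      if |j| ≤ (k : ℤ) ∧ Even ((k : ℤ) - j) then
        (k.choose (((k : ℤ) - j).toNat / 2) : ℝ) / 2 ^ k
      else 0)
    (A B C : ℕ → ℝ)
    (hA : Tendsto (fun n : ℕ => A n / n) atTop (𝓝 (1 / 2)))
    (hC : Tendsto (fun n : ℕ => C n / n) atTop (𝓝 (-(1 / 2))))
    (hB : Tendsto (fun n : ℕ => B n) atTop (𝓝 ((α - β) / 2)))
    (e1 e2 e3 e4 : ℕ → ℕ → ℤ → ℝ) (e5 : ℕ → ℤ → ℝ)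
    (he1 : ∀ (k : ℕ) (j : ℤ), Tendsto (fun n : ℕ => e1 k n j) atTop (𝓝 0))
    (he2 : ∀ (k : ℕ) (j : ℤ), Tendsto (fun n : ℕ => e2 k n j) atTop (𝓝 0))
    (he3 : ∀ (k : ℕ) (j : ℤ), Tendsto (fun n : ℕ => e3 k n j) atTop (𝓝 0))
    (he4 : ∀ (k : ℕ) (j : ℤ), Tendsto (fun n : ℕ => e4 k n j) atTop (𝓝 0))
    (he5 : ∀ j : ℤ, Tendsto (fun n : ℕ => e5 n j) atTop (𝓝 0))
    (u : ℕ → ℤ → ℝ)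
    (hu : ∀ (n : ℕ) (j : ℤ), |j| ≤ (m : ℤ) + 1 → u n j =
      (lam ((n : ℤ) + j) - tlam)⁻¹ *
        (A n * ∑ k ∈ Finset.range (m + 1), d k * (s k (j - 1) + e1 k n j)
          + C n * ∑ k ∈ Finset.range (m + 1), d k * (s k (j + 1) + e2 k n j)
          + ∑ k ∈ Finset.range (m + 1), (B n * d k - c k) * (s k j + e3 k n j)
          + (lam (n : ℤ) - tlam) *
              ∑ k ∈ Finset.Icc 1 m, (d (k - 1) / k) * (s k j + e4 k n j)
          + (lam (n : ℤ) - tlam) * (d m / (m + 1)) * (s (m + 1) j + e5 n j)))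
    (j : ℤ) (hj : |j| ≤ (m : ℤ) + 1) :
    Tendsto (fun n : ℕ => u n j) atTop (𝓝
      (if Even j then
        ∑ p ∈ Finset.Icc (max (j.natAbs / 2) 1) ((m + 1) / 2),
          d (2 * p - 1) / (2 * p) * ((2 * p).choose (p - j.natAbs / 2) : ℝ) / 2 ^ (2 * p)
      else
        ∑ p ∈ Finset.Icc (j.natAbs / 2) (m / 2),
          d (2 * p) / (2 * p + 1) * ((2 * p + 1).choose (p - j.natAbs / 2) : ℝ)
            / 2 ^ (2 * p + 1))) := by
  classical
  -- abbreviation for the denominator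
  set g : ℕ → ℝ := fun n => lam ((n : ℤ) + j) - tlam with hgdef
  have hg : ∀ n : ℕ, g n = ((n : ℝ) + (j : ℝ)) * (((n : ℝ) + (j : ℝ)) + (α + β + 1)) - tlam := by
    intro n
    simp only [hgdef, hlam]
    push_cast
    ring
  have hgn : ∀ n : ℕ, g n ≠ 0 := fun n => sub_ne_zero_of_ne (htlam ((n : ℤ) + j)).symm
  have t0 : ∀ cst : ℝ, Tendsto (fun n : ℕ => cst / (n : ℝ)) atTop (𝓝 0) :=
    tendsto_const_div_atTop_nhds_zero_nat
  have t0sq : ∀ cst : ℝ, Tendsto (fun n : ℕ => cst / (n : ℝ) ^ 2) atTop (𝓝 0) := by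
    intro cst
    have := (t0 cst).mul (t0 1)
    rw [mul_zero] at this
    refine this.congr fun n => ?_
    field_simp
  -- the normalized denominator
  set h₁ : ℕ → ℝ := fun n =>
    (1 + (j : ℝ) / n) * (1 + ((j : ℝ) + (α + β + 1)) / n) - tlam / (n : ℝ) ^ 2 with hh₁def
  have hh₁ : Tendsto h₁ atTop (𝓝 1) := by
    have h' : Tendsto h₁ atTop (𝓝 ((1 + 0) * (1 + 0) - 0)) :=
      ((tendsto_const_nhds.add (t0 (j : ℝ))).mul
        (tendsto_const_nhds.add (t0 ((j : ℝ) + (α + β + 1))))).sub (t0sq tlam)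
    simpa using h' 
  have hgfac : ∀ n : ℕ, (n : ℝ) ≠ 0 → g n = (n : ℝ) * ((n : ℝ) * h₁ n) := by
    intro n hn
    rw [hg]
    simp only [hh₁def]
    field_simp
    ring
  have hh₁ne : ∀ n : ℕ, (n : ℝ) ≠ 0 → h₁ n ≠ 0 := by
    intro n hn h0
    apply hgn n
    rw [hgfac n hn, h0, mul_zero, mul_zero]
  -- n / g n → 0
  have nlim : Tendsto (fun n : ℕ => (n : ℝ) / g n) atTop (𝓝 0) := by
    have lim1 : Tendsto (fun n : ℕ => (1 / (n : ℝ)) / h₁ n) atTop (𝓝 0) := by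
      have := (t0 1).div hh₁ one_ne_zero
      simpa [Pi.div_def] using this
    refine lim1.congr' ?_
    filter_upwards [eventually_ge_atTop 1] with n hn
    have hn0 : (n : ℝ) ≠ 0 := Nat.cast_ne_zero.mpr (by omega)
    rw [hgfac n hn0]
    field_simp [hh₁ne n hn0]
    try ring
  -- 1 / g n → 0
  have zlim : Tendsto (fun n : ℕ => 1 / g n) atTop (𝓝 0) := by
    have := (t0 1).mul nlim
    rw [mul_zero] at this
    refine this.congr' ?_
    filter_upwards [eventually_ge_atTop 1] with n hn
    have hn0 : (n : ℝ) ≠ 0 := Nat.cast_ne_zero.mpr (by omega)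
    field_simp [hgn n]
  -- (lam n - tlam) / g n → 1
  have rlim : Tendsto (fun n : ℕ => (lam (n : ℤ) - tlam) / g n) atTop (𝓝 1) := by
    set h₂ : ℕ → ℝ := fun n => 1 + (α + β + 1) / n - tlam / (n : ℝ) ^ 2 with hh₂def
    have hh₂ : Tendsto h₂ atTop (𝓝 1) := by
      have h' : Tendsto h₂ atTop (𝓝 ((1 + 0) - 0)) :=
        (tendsto_const_nhds.add (t0 (α + β + 1))).sub (t0sq tlam)
      simpa using h' 
    have lim1 : Tendsto (fun n : ℕ => h₂ n / h₁ n) atTop (𝓝 1) := by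
      have := hh₂.div hh₁ one_ne_zero
      simpa [Pi.div_def] using this
    refine lim1.congr' ?_
    filter_upwards [eventually_ge_atTop 1] with n hn
    have hn0 : (n : ℝ) ≠ 0 := Nat.cast_ne_zero.mpr (by omega)
    have hlamn : lam (n : ℤ) - tlam = (n : ℝ) * ((n : ℝ) * h₂ n) := by
      rw [hlam]
      simp only [hh₂def]
      push_cast
      field_simp
      ring
    rw [hlamn, hgfac n hn0]
    rw [mul_div_mul_left _ _ hn0, mul_div_mul_left _ _ hn0]
  -- limits of the sums
  have hS1 : Tendsto (fun n : ℕ => ∑ k ∈ Finset.range (m + 1), d k * (s k (j - 1) + e1 k n j))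
      atTop (𝓝 (∑ k ∈ Finset.range (m + 1), d k * s k (j - 1))) := by
    refine tendsto_finset_sum _ fun k _ => ?_
    have h' : Tendsto (fun n : ℕ => d k * (s k (j - 1) + e1 k n j)) atTop
        (𝓝 (d k * (s k (j - 1) + 0))) := (tendsto_const_nhds.add (he1 k j)).const_mul _
    simpa using h' 
  have hS2 : Tendsto (fun n : ℕ => ∑ k ∈ Finset.range (m + 1), d k * (s k (j + 1) + e2 k n j))
      atTop (𝓝 (∑ k ∈ Finset.range (m + 1), d k * s k (j + 1))) := by
    refine tendsto_finset_sum _ fun k _ => ?_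
    have h' : Tendsto (fun n : ℕ => d k * (s k (j + 1) + e2 k n j)) atTop
        (𝓝 (d k * (s k (j + 1) + 0))) := (tendsto_const_nhds.add (he2 k j)).const_mul _
    simpa using h' 
  have hS3 : Tendsto (fun n : ℕ => ∑ k ∈ Finset.range (m + 1), (B n * d k - c k) * (s k j + e3 k n j))
      atTop (𝓝 (∑ k ∈ Finset.range (m + 1), ((α - β) / 2 * d k - c k) * s k j)) := by
    refine tendsto_finset_sum _ fun k _ => ?_
    have h' : Tendsto (fun n : ℕ => (B n * d k - c k) * (s k j + e3 k n j)) atTop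
        (𝓝 (((α - β) / 2 * d k - c k) * (s k j + 0))) :=
      ((hB.mul_const (d k)).sub tendsto_const_nhds).mul (tendsto_const_nhds.add (he3 k j))
    simpa using h' 
  have hS4 : Tendsto (fun n : ℕ => ∑ k ∈ Finset.Icc 1 m, (d (k - 1) / k) * (s k j + e4 k n j))
      atTop (𝓝 (∑ k ∈ Finset.Icc 1 m, (d (k - 1) / k) * s k j)) := by
    refine tendsto_finset_sum _ fun k _ => ?_
    have h' : Tendsto (fun n : ℕ => d (k - 1) / (k : ℝ) * (s k j + e4 k n j)) atTop
        (𝓝 (d (k - 1) / (k : ℝ) * (s k j + 0))) :=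
      (tendsto_const_nhds.add (he4 k j)).const_mul _
    simpa using h' 
  have hS5 : Tendsto (fun n : ℕ => d m / (m + 1) * (s (m + 1) j + e5 n j))
      atTop (𝓝 (d m / (m + 1) * s (m + 1) j)) := by
    have h' : Tendsto (fun n : ℕ => d m / ((m : ℝ) + 1) * (s (m + 1) j + e5 n j)) atTop
        (𝓝 (d m / ((m : ℝ) + 1) * (s (m + 1) j + 0))) :=
      (tendsto_const_nhds.add (he5 j)).const_mul _
    simpa using h' 
  -- the main limit
  have key : Tendsto (fun n : ℕ => u n j) atTop
      (𝓝 ((∑ k ∈ Finset.Icc 1 m, (d (k - 1) / k) * s k j) + d m / (m + 1) * s (m + 1) j)) := by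
    have hT : Tendsto (fun n : ℕ =>
        (A n / n) * ((n : ℝ) / g n) * (∑ k ∈ Finset.range (m + 1), d k * (s k (j - 1) + e1 k n j))
        + (C n / n) * ((n : ℝ) / g n) * (∑ k ∈ Finset.range (m + 1), d k * (s k (j + 1) + e2 k n j))
        + (1 / g n) * (∑ k ∈ Finset.range (m + 1), (B n * d k - c k) * (s k j + e3 k n j))
        + ((lam (n : ℤ) - tlam) / g n) *
            ((∑ k ∈ Finset.Icc 1 m, (d (k - 1) / k) * (s k j + e4 k n j))
              + d m / (m + 1) * (s (m + 1) j + e5 n j)))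
        atTop (𝓝 (1 / 2 * 0 * (∑ k ∈ Finset.range (m + 1), d k * s k (j - 1))
          + (-(1 / 2)) * 0 * (∑ k ∈ Finset.range (m + 1), d k * s k (j + 1))
          + 0 * (∑ k ∈ Finset.range (m + 1), ((α - β) / 2 * d k - c k) * s k j)
          + 1 * ((∑ k ∈ Finset.Icc 1 m, (d (k - 1) / k) * s k j)
              + d m / (m + 1) * s (m + 1) j))) := by
      exact ((((hA.mul nlim).mul hS1).add ((hC.mul nlim).mul hS2)).add
        (zlim.mul hS3)).add (rlim.mul (hS4.add hS5))
    have hval : (1 / 2 * 0 * (∑ k ∈ Finset.range (m + 1), d k * s k (j - 1))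
          + (-(1 / 2)) * 0 * (∑ k ∈ Finset.range (m + 1), d k * s k (j + 1))
          + 0 * (∑ k ∈ Finset.range (m + 1), ((α - β) / 2 * d k - c k) * s k j)
          + 1 * ((∑ k ∈ Finset.Icc 1 m, (d (k - 1) / k) * s k j)
              + d m / (m + 1) * s (m + 1) j))
        = (∑ k ∈ Finset.Icc 1 m, (d (k - 1) / k) * s k j) + d m / (m + 1) * s (m + 1) j := by
      ring
    rw [← hval]
    refine hT.congr' ?_
    filter_upwards [eventually_ge_atTop 1] with n hn
    have hn0 : (n : ℝ) ≠ 0 := Nat.cast_ne_zero.mpr (by omega)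
    rw [hu n j hj]
    have hginv : (lam ((n : ℤ) + j) - tlam) = g n := rfl
    rw [hginv]
    field_simp [hgn n]
    ring
  -- identify the limit with the stated closed form
  have hLsum : (∑ k ∈ Finset.Icc 1 m, (d (k - 1) / k) * s k j) + d m / (m + 1) * s (m + 1) j
      = ∑ k ∈ Finset.Icc 1 (m + 1), d (k - 1) / (k : ℝ) * s k j := by
    rw [Finset.sum_Icc_succ_top (by omega : 1 ≤ m + 1)]
    congr 1
    simp only [Nat.add_sub_cancel]
    push_cast
    ring
  rw [hLsum] at key
  by_cases hjev : Even j
  · rw [if_pos hjev, ← sum_reindex_even m d s hs j hjev]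
    exact key
  · rw [if_neg hjev, ← sum_reindex_odd m d s hs j hjev]
    exact key
end

section
/- For every integer k ≥ 0: Σ_{m=0}^{⌊k/2⌋} C(k, 2m) · C(2m, m) · 2^{−2m} = C(2k, k) · 2^{−k}, where C denotes the binomial coefficient. -/
open Finset Polynomial

lemma coeff_one_add_X_sq (j n : ℕ) :
    ((1 + X ^ 2 : ℕ[X]) ^ j).coeff n = if 2 ∣ n then j.choose (n / 2) else 0 := by
  have h : (1 + X ^ 2 : ℕ[X]) ^ j = Polynomial.expand ℕ 2 ((1 + X) ^ j) := by simp
  rw [h, Polynomial.coeff_expand (by norm_num)]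
  simp [coeff_one_add_X_pow]

lemma key (k : ℕ) :
    ∑ m ∈ range (k / 2 + 1), k.choose (2 * m) * (2 * m).choose m * 2 ^ (k - 2 * m)
      = (2 * k).choose k := by
  have h0 : ((1 + X : ℕ[X]) ^ (2 * k)).coeff k = (2 * k).choose k :=
    coeff_one_add_X_pow ℕ (2 * k) k
  have h1 : (1 + X : ℕ[X]) ^ (2 * k) = ((1 + X ^ 2) + 2 * X) ^ k := by
    rw [pow_mul, show ((1 + X : ℕ[X]) ^ 2) = (1 + X ^ 2) + 2 * X by ring]
  rw [h1, add_pow] at h0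
  rw [← h0, finset_sum_coeff]
  have hterm : ∀ j ∈ range (k + 1),
      ((1 + X ^ 2 : ℕ[X]) ^ j * (2 * X) ^ (k - j) * (k.choose j : ℕ[X])).coeff k
        = (if 2 ∣ j then k.choose j * 2 ^ (k - j) * j.choose (j / 2) else 0) := by
    intro j hj
    have hjk : j ≤ k := by simpa using Nat.lt_succ_iff.mp (mem_range.mp hj)
    have : ((1 + X ^ 2 : ℕ[X]) ^ j * (2 * X) ^ (k - j) * (k.choose j : ℕ[X]))
        = ((2 ^ (k - j) * k.choose j : ℕ) : ℕ[X]) * ((1 + X ^ 2) ^ j * X ^ (k - j)) := by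
      push_cast
      ring
    rw [this, coeff_natCast_mul]
    rw [coeff_mul_X_pow', if_pos (by omega), show k - (k - j) = j by omega,
      coeff_one_add_X_sq]
    split <;> push_cast <;> ring
  rw [Finset.sum_congr rfl hterm, ← Finset.sum_filter]
  have hset : (range (k + 1)).filter (fun j => 2 ∣ j)
      = (range (k / 2 + 1)).image (fun m => 2 * m) := by
    ext j
    simp only [mem_filter, mem_range, mem_image]
    constructor
    · rintro ⟨h1, h2⟩; exact ⟨j / 2, by omega, by omega⟩
    · rintro ⟨m, hm, rfl⟩; exact ⟨by omega, ⟨m, rfl⟩⟩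
  rw [hset, Finset.sum_image (by intro a _ b _ h; simp only at h; omega)]
  apply Finset.sum_congr rfl
  intro m _
  rw [Nat.mul_div_cancel_left m (by norm_num)]
  ring

theorem central_binomial_identity (k : ℕ) :
    ∑ m ∈ Finset.range (k / 2 + 1),
        (k.choose (2 * m) : ℝ) * ((2 * m).choose m : ℝ) / 2 ^ (2 * m)
      = ((2 * k).choose k : ℝ) / 2 ^ k := by
  rw [← key k]
  push_cast
  rw [Finset.sum_div]
  apply Finset.sum_congr rfl
  intro m hm
  have h2m : 2 * m ≤ k := by
    have := Finset.mem_range.mp hm; omega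
  rw [eq_div_iff (by positivity)]
  have : ((2:ℝ) ^ (k - 2 * m)) * 2 ^ (2 * m) = 2 ^ k := by
    rw [← pow_add]; congr 1; omega
  field_simp
  rw [← this]
  ring
end

section
/- For all real numbers d_0, d_1 and every integer k ≥ 0: ∫_{−1}^{1} Q(x)^k dμ_e(x) = Σ_{i=0}^{⌊k/2⌋} C(k, 2i) · C(2(k−i), k−i) · d_0^{2i} · d_1^{k−2i} / 2^{3k−4i}, where C denotes the binomial coefficient. -/
open Real Finset


lemma meas_aux (n : ℕ) : Measurable fun x : ℝ => x ^ n / Real.sqrt (1 - x ^ 2) := by fun_prop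

lemma int_right (n : ℕ) : IntervalIntegrable (fun x : ℝ => x ^ n / Real.sqrt (1 - x ^ 2))
    MeasureTheory.volume 0 1 := by
  have hg : IntervalIntegrable (fun x : ℝ => (1 - x) ^ (-(1/2) : ℝ)) MeasureTheory.volume 0 1 := by
    have := ((intervalIntegral.intervalIntegrable_rpow' (a := 0) (b := 1) (r := -(1/2)) (by norm_num)).comp_sub_left 1).symm
    simpa using this
  apply hg.mono_fun ((meas_aux n).aestronglyMeasurable)
  filter_upwards [MeasureTheory.ae_restrict_mem measurableSet_uIoc] with x hx
  rw [Set.uIoc_of_le (by norm_num)] at hx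
  obtain ⟨hx0, hx1⟩ := hx
  simp only [Real.norm_eq_abs]
  have h1x : (0:ℝ) ≤ 1 - x := by linarith
  have hrw : (1 - x) ^ (-(1/2) : ℝ) = (Real.sqrt (1 - x))⁻¹ := by
    rw [Real.rpow_neg h1x, ← Real.sqrt_eq_rpow]
  rw [hrw]
  rw [abs_of_nonneg (by positivity : (0:ℝ) ≤ (Real.sqrt (1-x))⁻¹), abs_div, abs_of_nonneg (Real.sqrt_nonneg (1 - x^2))]
  have hs : Real.sqrt (1 - x) ≤ Real.sqrt (1 - x ^ 2) := by
    apply Real.sqrt_le_sqrt; nlinarith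
  have hxn : |x ^ n| ≤ 1 := by
    rw [abs_pow]
    exact pow_le_one₀ (abs_nonneg x) (by rw [abs_le]; constructor <;> linarith)
  calc |x ^ n| / Real.sqrt (1 - x ^ 2) ≤ 1 / Real.sqrt (1 - x ^ 2) := by gcongr
    _ ≤ (Real.sqrt (1 - x))⁻¹ := by
        rw [one_div]
        rcases eq_or_lt_of_le (Real.sqrt_nonneg (1 - x)) with h0 | h0
        · have hx1' : x = 1 := by
            have := (Real.sqrt_eq_zero h1x).mp h0.symm
            linarith
          subst hx1'
          norm_num
        · exact inv_anti₀ h0 hs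

lemma int_aux (n : ℕ) : IntervalIntegrable (fun x : ℝ => x ^ n / Real.sqrt (1 - x ^ 2))
    MeasureTheory.volume (-1) 1 := by
  have h1 := int_right n
  have h2 : IntervalIntegrable (fun x : ℝ => (-x) ^ n / Real.sqrt (1 - (-x) ^ 2))
      MeasureTheory.volume (-0) (-1) :=
    (IntervalIntegrable.iff_comp_neg (f := fun x : ℝ => x ^ n / Real.sqrt (1 - x ^ 2))).mp h1
  have h5 := (h2.symm).const_mul ((-1 : ℝ) ^ n)
  have he : (fun x : ℝ => ((-1 : ℝ) ^ n) * ((-x) ^ n / Real.sqrt (1 - (-x) ^ 2)))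
      = fun x : ℝ => x ^ n / Real.sqrt (1 - x ^ 2) := by
    funext x
    have : ((-x) : ℝ) ^ n = (-1) ^ n * x ^ n := by rw [neg_pow]
    rw [this, neg_sq, ← mul_div_assoc, ← mul_assoc, ← mul_pow]
    norm_num
  rw [he] at h5
  have h3 : IntervalIntegrable (fun x : ℝ => x ^ n / Real.sqrt (1 - x ^ 2))
      MeasureTheory.volume (-1) 0 := by simpa using h5
  exact h3.trans h1

lemma hasDerivAt_sqrt_one_sub_sq {x : ℝ} (hx : x ∈ Set.Ioo (-1:ℝ) 1) :
    HasDerivAt (fun y : ℝ => Real.sqrt (1 - y ^ 2)) (-x / Real.sqrt (1 - x ^ 2)) x := by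
  obtain ⟨h1, h2⟩ := hx
  have hpos : (0:ℝ) < 1 - x ^ 2 := by nlinarith
  have hinner : HasDerivAt (fun y : ℝ => 1 - y ^ 2) (-(2 * x)) x := by
    simpa using (hasDerivAt_pow 2 x).const_sub 1
  have houter := (Real.hasDerivAt_sqrt (ne_of_gt hpos)).comp x hinner
  refine houter.congr_deriv ?_
  have hs : Real.sqrt (1 - x ^ 2) ≠ 0 := by positivity
  field_simp

lemma I_zero : (∫ x in (-1:ℝ)..1, x ^ 0 / Real.sqrt (1 - x ^ 2)) = π := by
  rw [intervalIntegral.integral_eq_sub_of_hasDeriv_right_of_le (by norm_num)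
    Real.continuous_arcsin.continuousOn
    (fun x hx => by
      have := Real.hasDerivAt_arcsin (ne_of_gt hx.1) (ne_of_lt hx.2)
      simpa using this.hasDerivWithinAt)
    (int_aux 0)]
  simp [Real.arcsin_one, Real.arcsin_neg_one]

lemma I_one : (∫ x in (-1:ℝ)..1, x ^ 1 / Real.sqrt (1 - x ^ 2)) = 0 := by
  rw [intervalIntegral.integral_eq_sub_of_hasDeriv_right_of_le (by norm_num)
    (Continuous.continuousOn (by continuity : Continuous fun y : ℝ => -Real.sqrt (1 - y ^ 2)))
    (fun x hx => by
      have := (hasDerivAt_sqrt_one_sub_sq hx).neg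
      have h2 : -(-x / Real.sqrt (1 - x ^ 2)) = x ^ 1 / Real.sqrt (1 - x ^ 2) := by
        rw [neg_div, neg_neg, pow_one]
      rw [h2] at this
      exact this.hasDerivWithinAt)
    (int_aux 1)]
  norm_num

lemma I_rec (n : ℕ) :
    ((n:ℝ) + 2) * (∫ x in (-1:ℝ)..1, x ^ (n+2) / Real.sqrt (1 - x ^ 2))
      = ((n:ℝ) + 1) * ∫ x in (-1:ℝ)..1, x ^ n / Real.sqrt (1 - x ^ 2) := by
  have key : (∫ x in (-1:ℝ)..1,
      (((n:ℝ) + 2) * (x ^ (n+2) / Real.sqrt (1 - x ^ 2))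
        - ((n:ℝ) + 1) * (x ^ n / Real.sqrt (1 - x ^ 2)))) = 0 := by
    rw [intervalIntegral.integral_eq_sub_of_hasDeriv_right_of_le (by norm_num)
      (f := fun y : ℝ => -(y ^ (n+1) * Real.sqrt (1 - y ^ 2)))
      (Continuous.continuousOn (by continuity))
      (fun x hx => by
        have hpos : (0:ℝ) < 1 - x ^ 2 := by nlinarith [hx.1, hx.2]
        have hs : Real.sqrt (1 - x ^ 2) ≠ 0 := by positivity
        have hsq : Real.sqrt (1 - x ^ 2) ^ 2 = 1 - x ^ 2 := Real.sq_sqrt (le_of_lt hpos)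
        have hd := ((hasDerivAt_pow (n+1) x).mul (hasDerivAt_sqrt_one_sub_sq hx)).neg
        have heq : -((↑(n + 1) * x ^ (n + 1 - 1)) * Real.sqrt (1 - x ^ 2)
              + x ^ (n+1) * (-x / Real.sqrt (1 - x ^ 2)))
            = ((n:ℝ) + 2) * (x ^ (n+2) / Real.sqrt (1 - x ^ 2))
              - ((n:ℝ) + 1) * (x ^ n / Real.sqrt (1 - x ^ 2)) := by
          simp only [Nat.add_sub_cancel, Nat.cast_add, Nat.cast_one]
          field_simp
          ring_nf
          rw [hsq]
          ring
        rw [heq] at hd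
        exact hd.hasDerivWithinAt)
      (((int_aux (n+2)).const_mul _).sub ((int_aux n).const_mul _))]
    norm_num
  rw [intervalIntegral.integral_sub ((int_aux (n+2)).const_mul _) ((int_aux n).const_mul _),
    intervalIntegral.integral_const_mul, intervalIntegral.integral_const_mul] at key
  linarith

lemma I_odd (q : ℕ) : (∫ x in (-1:ℝ)..1, x ^ (2*q+1) / Real.sqrt (1 - x ^ 2)) = 0 := by
  induction q with
  | zero => simpa using I_one
  | succ q ih =>
      have h := I_rec (2*q+1)
      have he : 2*(q+1)+1 = (2*q+1)+2 := by ring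
      rw [he]
      rw [ih, mul_zero] at h
      have hpos : ((2*q+1 : ℕ) : ℝ) + 2 ≠ 0 := by positivity
      exact (mul_eq_zero.mp h).resolve_left hpos

lemma I_even (q : ℕ) : (∫ x in (-1:ℝ)..1, x ^ (2*q) / Real.sqrt (1 - x ^ 2))
    = π * ((2*q).choose q) / 2 ^ (2*q) := by
  induction q with
  | zero => simpa using I_zero
  | succ q ih =>
      have h := I_rec (2*q)
      rw [ih] at h
      have he : 2*(q+1) = (2*q)+2 := by ring
      rw [he]
      have hc : ((q:ℝ)+1) * (((2*q+2).choose (q+1) : ℕ) : ℝ)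
          = 2*(2*(q:ℝ)+1) * (((2*q).choose q : ℕ) : ℝ) := by
        have := Nat.succ_mul_centralBinom_succ q
        unfold Nat.centralBinom at this
        have h2 : 2*(q+1) = 2*q+2 := by ring
        rw [h2] at this
        exact_mod_cast this
      have hpos : ((2*q : ℕ) : ℝ) + 2 ≠ 0 := by positivity
      have h2q : ((2*q:ℕ):ℝ) = 2*(q:ℝ) := by push_cast; ring
      rw [h2q] at h
      have hgoal : (∫ x in (-1:ℝ)..1, x ^ (2*q+2) / Real.sqrt (1 - x ^ 2))
          = (2*(q:ℝ)+1) * (π * ((2*q).choose q) / 2 ^ (2*q)) / (2*(q:ℝ)+2) := by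
        rw [eq_div_iff (by positivity)]
        linarith [h]
      rw [hgoal]
      rw [div_eq_div_iff (by positivity) (by positivity)]
      have hp : (2:ℝ) ^ (2*q+2) = 4 * 2 ^ (2*q) := by ring
      rw [hp]
      have h2 : (2:ℝ) ^ (2*q) ≠ 0 := by positivity
      field_simp
      linear_combination (-2) * hc

lemma sum_even_range (k : ℕ) (f : ℕ → ℝ) (hf : ∀ j ∈ Finset.range (k+1), Odd j → f j = 0) :
    ∑ j ∈ Finset.range (k+1), f j = ∑ i ∈ Finset.range (k/2+1), f (2*i) := by
  have himg : (Finset.range (k/2+1)).image (fun i => 2*i)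
      = (Finset.range (k+1)).filter (fun j => Even j) := by
    ext j
    simp only [Finset.mem_image, Finset.mem_filter, Finset.mem_range, Nat.even_iff]
    constructor
    · rintro ⟨i, hi, rfl⟩; omega
    · rintro ⟨hj, hj2⟩; exact ⟨j/2, by omega, by omega⟩
  rw [← Finset.sum_filter_add_sum_filter_not (Finset.range (k+1)) (fun j => Even j) f]
  have h0 : ∑ j ∈ (Finset.range (k+1)).filter (fun j => ¬ Even j), f j = 0 := by
    apply Finset.sum_eq_zero
    intro j hj
    rw [Finset.mem_filter] at hj
    exact hf j hj.1 (Nat.not_even_iff_odd.mp hj.2)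
  rw [h0, add_zero, ← himg, Finset.sum_image (fun a _ b _ h => by omega)]

theorem arcsine_moments_of_Q (d0 d1 : ℝ) (k : ℕ) :
    (∫ x in (-1 : ℝ)..1, (d1 / 2 * x ^ 2 + d0 * x) ^ k / (π * Real.sqrt (1 - x ^ 2)))
      = ∑ i ∈ Finset.range (k / 2 + 1),
          (k.choose (2 * i) : ℝ) * ((2 * (k - i)).choose (k - i) : ℝ) *
            d0 ^ (2 * i) * d1 ^ (k - 2 * i) / 2 ^ (3 * k - 4 * i) := by

  have hexp : ∀ x : ℝ, (d1 / 2 * x ^ 2 + d0 * x) ^ k / (π * Real.sqrt (1 - x ^ 2))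
      = ∑ j ∈ Finset.range (k+1),
          ((k.choose j : ℝ) * d0 ^ j * (d1/2) ^ (k-j) / π) * (x ^ (2*k-j) / Real.sqrt (1 - x ^ 2)) := by
    intro x
    rw [add_comm, add_pow, Finset.sum_div]
    apply Finset.sum_congr rfl
    intro j hj
    have hj' : j ≤ k := by
      rw [Finset.mem_range] at hj; omega
    have hxp : x ^ j * (x ^ 2) ^ (k-j) = x ^ (2*k-j) := by
      rw [← pow_mul, ← pow_add]
      congr 1
      omega
    have hnum : (d0*x) ^ j * (d1/2*x^2) ^ (k-j) * (k.choose j : ℝ)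
        = ((k.choose j : ℝ) * d0 ^ j * (d1/2) ^ (k-j)) * x ^ (2*k-j) := by
      rw [mul_pow, mul_pow, ← hxp]
      ring
    rw [hnum, div_mul_div_comm]
  rw [intervalIntegral.integral_congr (fun x _ => hexp x)]
  rw [intervalIntegral.integral_finset_sum (fun j _ =>
    ((int_aux (2*k-j)).const_mul ((k.choose j : ℝ) * d0 ^ j * (d1/2) ^ (k-j) / π)))]
  simp only [intervalIntegral.integral_const_mul]
  rw [sum_even_range k _ (fun j hj hodd => by
    obtain ⟨t, ht⟩ := hodd
    have hj' : j ≤ k := by rw [Finset.mem_range] at hj; omega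
    have h2 : 2*k - j = 2*(k-t-1)+1 := by omega
    rw [h2, I_odd, mul_zero])]
  apply Finset.sum_congr rfl
  intro i hi
  have hi' : 2*i ≤ k := by
    rw [Finset.mem_range] at hi; omega
  have h2 : 2*k - 2*i = 2*(k-i) := by omega
  rw [h2, I_even]
  have hpow : (2:ℝ) ^ (3*k - 4*i) = 2 ^ (k - 2*i) * 2 ^ (2*(k-i)) := by
    rw [← pow_add]
    congr 1
    omega
  rw [div_pow, hpow]
  have hπ : π ≠ 0 := Real.pi_ne_zero
  have h2a : (2:ℝ) ^ (k - 2*i) ≠ 0 := by positivity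
  have h2b : (2:ℝ) ^ (2*(k-i)) ≠ 0 := by positivity
  field_simp
end

section
/- For all integers k ≥ 0 and i with 0 ≤ i ≤ ⌊k/2⌋: S_{k,i} = C(2(k−i), k−i) · 2^{−(k−2i)}, where C denotes the binomial coefficient. -/
open Finset

/-- Auxiliary quantity: the inner sum of `Squant` rescaled to live in `ℕ`. -/
def PnAux (n s : ℕ) : ℕ :=
  ∑ m ∈ Finset.range (n + 1), n.choose (s + 2 * m) * (s + 2 * m).choose m * 4 ^ (n - m)

lemma choose_central_succ (n : ℕ) :
    (2 * n + 2).choose (n + 1) = 2 * ((2 * n).choose n + (2 * n).choose (n + 1)) := by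
  have h1 : (2 * n + 2).choose (n + 1)
      = (2 * n + 1).choose n + (2 * n + 1).choose (n + 1) := Nat.choose_succ_succ _ _
  have h2 : (2 * n + 1).choose n = (2 * n + 1).choose (n + 1) := by
    rw [← Nat.choose_symm (by omega : n + 1 ≤ 2 * n + 1)]; congr 1; omega
  have h3 : (2 * n + 1).choose (n + 1) = (2 * n).choose n + (2 * n).choose (n + 1) :=
    Nat.choose_succ_succ _ _
  omega

lemma choose_double_pascal (a j : ℕ) :
    (a + 2).choose (j + 2) = a.choose j + 2 * a.choose (j + 1) + a.choose (j + 2) := by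
  have h1 : (a + 2).choose (j + 2) = (a + 1).choose (j + 1) + (a + 1).choose (j + 2) :=
    Nat.choose_succ_succ _ _
  have h2 : (a + 1).choose (j + 1) = a.choose j + a.choose (j + 1) := Nat.choose_succ_succ _ _
  have h3 : (a + 1).choose (j + 2) = a.choose (j + 1) + a.choose (j + 2) := Nat.choose_succ_succ _ _
  omega

lemma choose_half_succ (m : ℕ) : (2 * m + 2).choose (m + 1) = 2 * (2 * m + 1).choose m := by
  have h1 : (2 * m + 2).choose (m + 1)
      = (2 * m + 1).choose m + (2 * m + 1).choose (m + 1) := Nat.choose_succ_succ _ _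
  have h2 : (2 * m + 1).choose m = (2 * m + 1).choose (m + 1) := by
    rw [← Nat.choose_symm (by omega : m + 1 ≤ 2 * m + 1)]; congr 1; omega
  omega

lemma PnAux_succ_zero (n : ℕ) : PnAux (n + 1) 0 = 2 * PnAux n 1 + 4 * PnAux n 0 := by
  unfold PnAux
  rw [Finset.sum_range_succ]
  have htop : (n + 1).choose (0 + 2 * (n + 1)) = 0 := Nat.choose_eq_zero_of_lt (by omega)
  rw [htop]
  simp only [zero_mul, add_zero]
  rw [Finset.sum_range_succ' (fun m => (n + 1).choose (0 + 2 * m) * (0 + 2 * m).choose m * 4 ^ (n + 1 - m)) n]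
  have key : ∀ m ∈ Finset.range n,
      (n + 1).choose (0 + 2 * (m + 1)) * (0 + 2 * (m + 1)).choose (m + 1) * 4 ^ (n + 1 - (m + 1))
      = 2 * (n.choose (1 + 2 * m) * (1 + 2 * m).choose m * 4 ^ (n - m))
        + 4 * (n.choose (0 + 2 * (m + 1)) * (0 + 2 * (m + 1)).choose (m + 1) * 4 ^ (n - (m + 1))) := by
    intro m hm
    rw [Finset.mem_range] at hm
    have e1 : 0 + 2 * (m + 1) = 2 * m + 2 := by ring
    have e2 : 1 + 2 * m = 2 * m + 1 := by ring
    rw [e1, e2]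
    have hp : (n + 1).choose (2 * m + 2) = n.choose (2 * m + 1) + n.choose (2 * m + 2) :=
      Nat.choose_succ_succ _ _
    have hh := choose_half_succ m
    have hpow1 : n + 1 - (m + 1) = n - m := by omega
    have hpow2 : 4 ^ (n - m) = 4 * 4 ^ (n - (m + 1)) := by
      rw [← pow_succ']
      congr 1
      omega
    rw [hpow1, hp, hh, hpow2]
    ring
  rw [Finset.sum_congr rfl key, Finset.sum_add_distrib]
  have s1 : ∑ m ∈ Finset.range n, 2 * (n.choose (1 + 2 * m) * (1 + 2 * m).choose m * 4 ^ (n - m))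
      = 2 * ∑ m ∈ Finset.range n, n.choose (1 + 2 * m) * (1 + 2 * m).choose m * 4 ^ (n - m) := by
    rw [Finset.mul_sum]
  have s2 : ∑ m ∈ Finset.range n, 4 * (n.choose (0 + 2 * (m + 1)) * (0 + 2 * (m + 1)).choose (m + 1) * 4 ^ (n - (m + 1)))
      = 4 * ∑ m ∈ Finset.range n, n.choose (0 + 2 * (m + 1)) * (0 + 2 * (m + 1)).choose (m + 1) * 4 ^ (n - (m + 1)) := by
    rw [Finset.mul_sum]
  rw [s1, s2]
  have p1 : ∑ m ∈ Finset.range (n+1), n.choose (1 + 2 * m) * (1 + 2 * m).choose m * 4 ^ (n - m) = ∑ m ∈ Finset.range n, n.choose (1 + 2 * m) * (1 + 2 * m).choose m * 4 ^ (n - m) := by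
    rw [Finset.sum_range_succ]
    have : n.choose (1 + 2 * n) = 0 := Nat.choose_eq_zero_of_lt (by omega)
    rw [this]; simp
  have p0 : ∑ m ∈ Finset.range (n+1), n.choose (0 + 2 * m) * (0 + 2 * m).choose m * 4 ^ (n - m) = (∑ m ∈ Finset.range n, n.choose (0 + 2 * (m + 1)) * (0 + 2 * (m + 1)).choose (m + 1) * 4 ^ (n - (m + 1))) + 4 ^ n := by
    rw [Finset.sum_range_succ' (fun m => n.choose (0 + 2 * m) * (0 + 2 * m).choose m * 4 ^ (n - m)) n]
    simp
  rw [p1, p0]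
  simp only [Nat.choose_zero_right, Nat.choose_self, mul_zero, Nat.mul_zero, Nat.zero_add,
    Nat.sub_zero, one_mul, mul_one, Nat.choose_zero_right]
  rw [pow_succ]
  ring

lemma PnAux_succ_succ (n t : ℕ) :
    PnAux (n + 1) (t + 1) = 4 * PnAux n t + 4 * PnAux n (t + 1) + PnAux n (t + 2) := by
  unfold PnAux
  rw [Finset.sum_range_succ]
  have htop : (n + 1).choose (t + 1 + 2 * (n + 1)) = 0 := Nat.choose_eq_zero_of_lt (by omega)
  rw [htop]
  simp only [zero_mul, add_zero]
  have key1 : ∀ m ∈ Finset.range (n + 1),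
      (n + 1).choose (t + 1 + 2 * m) * (t + 1 + 2 * m).choose m * 4 ^ (n + 1 - m)
      = n.choose (t + 2 * m) * (t + 1 + 2 * m).choose m * 4 ^ (n + 1 - m)
        + 4 * (n.choose (t + 1 + 2 * m) * (t + 1 + 2 * m).choose m * 4 ^ (n - m)) := by
    intro m hm
    rw [Finset.mem_range] at hm
    have e : t + 1 + 2 * m = (t + 2 * m) + 1 := by ring
    rw [e, Nat.choose_succ_succ n (t + 2 * m)]
    have hpow : 4 ^ (n + 1 - m) = 4 * 4 ^ (n - m) := by
      rw [← pow_succ']; congr 1; omega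
    rw [hpow]
    ring
  rw [Finset.sum_congr rfl key1, Finset.sum_add_distrib]
  have s2 : ∑ m ∈ Finset.range (n + 1),
        4 * (n.choose (t + 1 + 2 * m) * (t + 1 + 2 * m).choose m * 4 ^ (n - m))
      = 4 * ∑ m ∈ Finset.range (n + 1),
        n.choose (t + 1 + 2 * m) * (t + 1 + 2 * m).choose m * 4 ^ (n - m) := Finset.mul_sum _ _ _ |>.symm
  rw [s2]
  rw [Finset.sum_range_succ' (fun m => n.choose (t + 2 * m) * (t + 1 + 2 * m).choose m * 4 ^ (n + 1 - m)) n]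
  have key2 : ∀ m ∈ Finset.range n,
      n.choose (t + 2 * (m + 1)) * (t + 1 + 2 * (m + 1)).choose (m + 1) * 4 ^ (n + 1 - (m + 1))
      = n.choose (t + 2 + 2 * m) * (t + 2 + 2 * m).choose m * 4 ^ (n - m)
        + 4 * (n.choose (t + 2 * (m + 1)) * (t + 2 * (m + 1)).choose (m + 1) * 4 ^ (n - (m + 1))) := by
    intro m hm
    rw [Finset.mem_range] at hm
    have e1 : t + 1 + 2 * (m + 1) = (t + 2 * m + 2) + 1 := by ring
    have e2 : t + 2 * (m + 1) = t + 2 * m + 2 := by ring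
    have e3 : t + 2 + 2 * m = t + 2 * m + 2 := by ring
    have e4 : n + 1 - (m + 1) = n - m := by omega
    rw [e1, e2, e3, e4, Nat.choose_succ_succ (t + 2 * m + 2) m]
    have hpow : 4 ^ (n - m) = 4 * 4 ^ (n - (m + 1)) := by
      rw [← pow_succ']; congr 1; omega
    rw [hpow]
    ring
  rw [Finset.sum_congr rfl key2, Finset.sum_add_distrib]
  have s4 : ∑ m ∈ Finset.range n,
        4 * (n.choose (t + 2 * (m + 1)) * (t + 2 * (m + 1)).choose (m + 1) * 4 ^ (n - (m + 1)))
      = 4 * ∑ m ∈ Finset.range n,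
        n.choose (t + 2 * (m + 1)) * (t + 2 * (m + 1)).choose (m + 1) * 4 ^ (n - (m + 1)) := Finset.mul_sum _ _ _ |>.symm
  rw [s4]
  have p2 : ∑ m ∈ Finset.range (n + 1), n.choose (t + 2 + 2 * m) * (t + 2 + 2 * m).choose m * 4 ^ (n - m)
      = ∑ m ∈ Finset.range n, n.choose (t + 2 + 2 * m) * (t + 2 + 2 * m).choose m * 4 ^ (n - m) := by
    rw [Finset.sum_range_succ]
    have : n.choose (t + 2 + 2 * n) = 0 := Nat.choose_eq_zero_of_lt (by omega)
    rw [this]; simp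
  have p0 : ∑ m ∈ Finset.range (n + 1), n.choose (t + 2 * m) * (t + 2 * m).choose m * 4 ^ (n - m)
      = (∑ m ∈ Finset.range n, n.choose (t + 2 * (m + 1)) * (t + 2 * (m + 1)).choose (m + 1) * 4 ^ (n - (m + 1)))
        + n.choose t * 4 ^ n := by
    rw [Finset.sum_range_succ' (fun m => n.choose (t + 2 * m) * (t + 2 * m).choose m * 4 ^ (n - m)) n]
    simp
  rw [p2, p0]
  simp only [mul_zero, add_zero, Nat.choose_zero_right, mul_one, Nat.sub_zero, pow_succ]
  ring

lemma PnAux_eq (n : ℕ) : ∀ s, PnAux n s = (2 * n).choose (n + s) * 2 ^ (n + s) := by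
  induction n with
  | zero =>
    intro s
    cases s with
    | zero => simp [PnAux]
    | succ t => simp [PnAux, Nat.choose_eq_zero_of_lt]
  | succ n ih =>
    intro s
    cases s with
    | zero =>
      rw [PnAux_succ_zero, ih, ih]
      have e1 : 2 * (n + 1) = 2 * n + 2 := by ring
      have e2 : n + 1 + 0 = n + 1 := by ring
      rw [e1, e2, choose_central_succ]
      rw [pow_succ]
      ring
    | succ t =>
      rw [PnAux_succ_succ, ih, ih, ih]
      have e1 : 2 * (n + 1) = 2 * n + 2 := by ring
      have e2 : n + 1 + (t + 1) = (n + t) + 2 := by ring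
      have e3 : n + (t + 1) = (n + t) + 1 := by ring
      have e4 : n + (t + 2) = (n + t) + 2 := by ring
      rw [e1, e2, e3, e4, choose_double_pascal]
      rw [pow_succ, pow_succ]
      ring

lemma vand_fold (i n : ℕ) :
    (2 * i).choose i * (2 * n).choose n
      + 2 * ∑ s ∈ Finset.range (min i n), (2 * i).choose (i + s + 1) * (2 * n).choose (n + s + 1)
    = (2 * (i + n)).choose (i + n) := by
  have h := Nat.add_choose_eq (2 * i) (2 * n) (i + n)
  rw [Finset.Nat.sum_antidiagonal_eq_sum_range_succ_mk] at h
  simp only [Nat.succ_eq_add_one] at h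
  have e : i + n + 1 = i + (n + 1) := by ring
  rw [e, Finset.sum_range_add] at h
  rw [← Finset.sum_range_reflect (fun j => (2 * i).choose j * (2 * n).choose (i + n - j)) i] at h
  have hA : ∑ t ∈ Finset.range i, (2 * i).choose (i - 1 - t) * (2 * n).choose (i + n - (i - 1 - t))
      = ∑ t ∈ Finset.range i, (2 * i).choose (i + t + 1) * (2 * n).choose (n + t + 1) := by
    apply Finset.sum_congr rfl
    intro t ht
    rw [Finset.mem_range] at ht
    have h1 : (2 * i).choose (i - 1 - t) = (2 * i).choose (i + t + 1) := by
      have e1 : i - 1 - t = 2 * i - (i + t + 1) := by omega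
      rw [e1, Nat.choose_symm (by omega)]
    have h2 : i + n - (i - 1 - t) = n + t + 1 := by omega
    rw [h1, h2]
  have hB : ∑ s ∈ Finset.range (n + 1), (2 * i).choose (i + s) * (2 * n).choose (i + n - (i + s))
      = ∑ s ∈ Finset.range (n + 1), (2 * i).choose (i + s) * (2 * n).choose (n + s) := by
    apply Finset.sum_congr rfl
    intro s hs
    rw [Finset.mem_range] at hs
    have h1 : i + n - (i + s) = 2 * n - (n + s) := by omega
    rw [h1, Nat.choose_symm (by omega)]
  rw [hA, hB] at h
  rw [Finset.sum_range_succ' (fun s => (2 * i).choose (i + s) * (2 * n).choose (n + s)) n] at h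
  have hmi : ∑ t ∈ Finset.range (min i n), (2 * i).choose (i + t + 1) * (2 * n).choose (n + t + 1)
      = ∑ t ∈ Finset.range i, (2 * i).choose (i + t + 1) * (2 * n).choose (n + t + 1) := by
    apply Finset.sum_subset (Finset.range_subset_range.mpr (min_le_left i n))
    intro x hx hx'
    rw [Finset.mem_range] at hx
    rw [Finset.mem_range, not_lt] at hx'
    have : n ≤ x := by omega
    have hz : (2 * n).choose (n + x + 1) = 0 := Nat.choose_eq_zero_of_lt (by omega)
    rw [hz, mul_zero]
  have hmn : ∑ t ∈ Finset.range (min i n), (2 * i).choose (i + t + 1) * (2 * n).choose (n + t + 1)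
      = ∑ t ∈ Finset.range n, (2 * i).choose (i + (t + 1)) * (2 * n).choose (n + (t + 1)) := by
    have := Finset.sum_subset (Finset.range_subset_range.mpr (min_le_right i n))
      (f := fun t => (2 * i).choose (i + t + 1) * (2 * n).choose (n + t + 1)) ?_
    · rw [this]
      apply Finset.sum_congr rfl
      intro t _
      congr 2 <;> omega
    · intro x hx hx'
      rw [Finset.mem_range] at hx
      rw [Finset.mem_range, not_lt] at hx'
      have : i ≤ x := by omega
      have hz : (2 * i).choose (i + x + 1) = 0 := Nat.choose_eq_zero_of_lt (by omega)
      show (2 * i).choose (i + x + 1) * (2 * n).choose (n + x + 1) = 0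
      rw [hz, zero_mul]
  have e0 : 2 * (i + n) = 2 * i + 2 * n := by ring
  rw [e0]
  simp only [add_zero] at h
  omega

lemma inner_eq (n s : ℕ) (hs : s ≤ n) :
    ∑ m ∈ Finset.range ((n - s) / 2 + 1),
        (n.choose (s + 2 * m) : ℝ) * ((s + 2 * m).choose m : ℝ) / 2 ^ (2 * m + (s - 1))
      = ((2 * n).choose (n + s) : ℝ) * 2 ^ (n + s) / (4 ^ n * 2 ^ (s - 1)) := by
  rw [Finset.sum_subset (Finset.range_subset_range.mpr (by omega : (n - s) / 2 + 1 ≤ n + 1))]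
  · have key : ∀ m ∈ Finset.range (n + 1),
        (n.choose (s + 2 * m) : ℝ) * ((s + 2 * m).choose m : ℝ) / 2 ^ (2 * m + (s - 1))
        = ((n.choose (s + 2 * m) * (s + 2 * m).choose m * 4 ^ (n - m) : ℕ) : ℝ)
            / (4 ^ n * 2 ^ (s - 1)) := by
      intro m hm
      rw [Finset.mem_range] at hm
      have h4 : (4 : ℝ) ^ n = 4 ^ (n - m) * 4 ^ m := by
        rw [← pow_add]; congr 1; omega
      have h2 : (2 : ℝ) ^ (2 * m + (s - 1)) = 4 ^ m * 2 ^ (s - 1) := by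
        rw [pow_add, pow_mul]; norm_num
      rw [h2, h4]
      push_cast
      have hne : (4 : ℝ) ^ m ≠ 0 := by positivity
      have hne2 : (2 : ℝ) ^ (s - 1) ≠ 0 := by positivity
      have hne3 : (4 : ℝ) ^ (n - m) ≠ 0 := by positivity
      field_simp
    rw [Finset.sum_congr rfl key, ← Finset.sum_div, ← Nat.cast_sum]
    have : ∑ m ∈ Finset.range (n + 1), n.choose (s + 2 * m) * (s + 2 * m).choose m * 4 ^ (n - m)
        = PnAux n s := rfl
    rw [this, PnAux_eq]
    push_cast
    ring
  · intro x hx hx'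
    rw [Finset.mem_range] at hx
    rw [Finset.mem_range, not_lt] at hx'
    have hz : n.choose (s + 2 * x) = 0 := Nat.choose_eq_zero_of_lt (by omega)
    rw [hz]
    norm_num

/-- The combinatorial quantity `S_{k,i}` from the study of iterated five-term
recurrence coefficients.  Here `s - 1` and `k - 2*i - s` denote truncated natural
subtraction, so `s - 1 = max {0, s-1}`. -/
noncomputable def Squant (k i : ℕ) : ℝ :=
  ∑ s ∈ Finset.range (min i (k - 2 * i) + 1),
    ((2 * i).choose (s + i) : ℝ) *
      ∑ m ∈ Finset.range ((k - 2 * i - s) / 2 + 1),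
        ((k - 2 * i).choose (s + 2 * m) : ℝ) * ((s + 2 * m).choose m : ℝ) /
          2 ^ (2 * m + (s - 1))

theorem Squant_eq (k i : ℕ) (hi : i ≤ k / 2) :
    Squant k i = ((2 * (k - i)).choose (k - i) : ℝ) / 2 ^ (k - 2 * i) := by
  have h2i : 2 * i ≤ k := by omega
  unfold Squant
  set n := k - 2 * i with hn
  have hki : k - i = i + n := by omega
  rw [hki]
  have step1 : ∀ s ∈ Finset.range (min i n + 1),
      ((2 * i).choose (s + i) : ℝ) *
        ∑ m ∈ Finset.range ((n - s) / 2 + 1),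
          (n.choose (s + 2 * m) : ℝ) * ((s + 2 * m).choose m : ℝ) / 2 ^ (2 * m + (s - 1))
      = ((2 * i).choose (s + i) : ℝ) *
          (((2 * n).choose (n + s) : ℝ) * 2 ^ (n + s) / (4 ^ n * 2 ^ (s - 1))) := by
    intro s hs
    rw [inner_eq n s (by rw [Finset.mem_range] at hs; omega)]
  rw [Finset.sum_congr rfl step1]
  rw [Finset.sum_range_succ' (fun s => ((2 * i).choose (s + i) : ℝ) *
      (((2 * n).choose (n + s) : ℝ) * 2 ^ (n + s) / (4 ^ n * 2 ^ (s - 1)))) (min i n)]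
  have step2 : ∀ s ∈ Finset.range (min i n),
      ((2 * i).choose (s + 1 + i) : ℝ) *
        (((2 * n).choose (n + (s + 1)) : ℝ) * 2 ^ (n + (s + 1)) / (4 ^ n * 2 ^ (s + 1 - 1)))
      = ((2 * ((2 * i).choose (i + s + 1) * (2 * n).choose (n + s + 1)) : ℕ) : ℝ) / 2 ^ n := by
    intro s _
    have e1 : s + 1 + i = i + s + 1 := by ring
    have e2 : n + (s + 1) = n + s + 1 := by ring
    have e3 : s + 1 - 1 = s := by omega
    rw [e1, e2, e3]
    have h4 : (4 : ℝ) ^ n = 2 ^ n * 2 ^ n := by rw [show (4 : ℝ) = 2 * 2 by norm_num, mul_pow]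
    push_cast
    rw [h4, pow_add, pow_add]
    have h2 : (2 : ℝ) ^ n ≠ 0 := by positivity
    have h2s : (2 : ℝ) ^ s ≠ 0 := by positivity
    field_simp
  rw [Finset.sum_congr rfl step2, ← Finset.sum_div, ← Nat.cast_sum]
  have step0 : ((2 * i).choose (0 + i) : ℝ) *
      (((2 * n).choose (n + 0) : ℝ) * 2 ^ (n + 0) / (4 ^ n * 2 ^ (0 - 1)))
      = (((2 * i).choose i * (2 * n).choose n : ℕ) : ℝ) / 2 ^ n := by
    have h4 : (4 : ℝ) ^ n = 2 ^ n * 2 ^ n := by rw [show (4 : ℝ) = 2 * 2 by norm_num, mul_pow]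
    simp only [Nat.zero_add, Nat.add_zero, Nat.zero_sub, pow_zero, mul_one, zero_add, add_zero]
    push_cast
    rw [h4]
    have h2 : (2 : ℝ) ^ n ≠ 0 := by positivity
    field_simp
  rw [step0]
  rw [← add_div, ← Nat.cast_add]
  have : (∑ s ∈ Finset.range (min i n), 2 * ((2 * i).choose (i + s + 1) * (2 * n).choose (n + s + 1)))
      + (2 * i).choose i * (2 * n).choose n = (2 * (i + n)).choose (i + n) := by
    rw [← Finset.mul_sum]
    have := vand_fold i n
    omega
  rw [this]
end

section
/- Under the orthonormality and five-term recurrence hypotheses below, for every integer k ≥ 0: lim_{n→∞} ∫_{−1}^{1} Q(x)^k P_n(x)² W(x) dx = ∫_{−1}^{1} Q(x)^k dμ_e(x). -/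
open Finset Filter Topology Real
open MeasureTheory

-- integrability of 1/sqrt(1-x^2)
lemma intOn_inv_sqrt : IntegrableOn (fun x : ℝ => 1 / Real.sqrt (1 - x ^ 2)) (Set.Icc (-1) 1) volume := by
  have h1 : IntervalIntegrable (fun x : ℝ => (1 - x) ^ (-(1/2) : ℝ)) volume (-1) 1 := by
    have := (intervalIntegral.intervalIntegrable_rpow' (a := (0:ℝ)) (b := 2) (r := -(1/2)) (by norm_num)).comp_sub_left 1
    norm_num at this
    exact this.symm
  have h2 : IntervalIntegrable (fun x : ℝ => (1 + x) ^ (-(1/2) : ℝ)) volume (-1) 1 := by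
    have := (intervalIntegral.intervalIntegrable_rpow' (a := (0:ℝ)) (b := 2) (r := -(1/2)) (by norm_num)).comp_add_right 1
    norm_num at this
    convert this using 2 with x
    ring_nf
  have hmaj : IntegrableOn (fun x : ℝ => (1 - x) ^ (-(1/2) : ℝ) + (1 + x) ^ (-(1/2) : ℝ)) (Set.Icc (-1) 1) volume := by
    have := (h1.add h2)
    rw [intervalIntegrable_iff_integrableOn_Icc_of_le (by norm_num)] at this
    exact this
  apply hmaj.integrable.mono'
  · apply Measurable.aestronglyMeasurable
    exact (measurable_const.div ((measurable_const.sub (measurable_id.pow_const 2)).sqrt))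
  · rw [ae_restrict_iff' measurableSet_Icc]
    filter_upwards with x hx
    obtain ⟨hx1, hx2⟩ := hx
    have h1x : (0:ℝ) ≤ 1 - x := by linarith
    have h2x : (0:ℝ) ≤ 1 + x := by linarith
    have hs : Real.sqrt (1 - x ^ 2) = Real.sqrt (1 - x) * Real.sqrt (1 + x) := by
      rw [← Real.sqrt_mul h1x]; ring_nf
    have e1 : (1 - x) ^ (-(1/2) : ℝ) = (Real.sqrt (1 - x))⁻¹ := by
      rw [Real.rpow_neg h1x, ← Real.sqrt_eq_rpow]
    have e2 : (1 + x) ^ (-(1/2) : ℝ) = (Real.sqrt (1 + x))⁻¹ := by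
      rw [Real.rpow_neg h2x, ← Real.sqrt_eq_rpow]
    rw [Real.norm_eq_abs, abs_of_nonneg (by positivity), hs, e1, e2]
    rcases eq_or_lt_of_le h2x with h | h
    · rw [← h]
      simp [Real.sqrt_zero]
    rcases eq_or_lt_of_le h1x with h' | h'
    · rw [← h']
      simp [Real.sqrt_zero]
    have hsp : 0 < Real.sqrt (1 - x) := Real.sqrt_pos.mpr h'
    have htp : 0 < Real.sqrt (1 + x) := Real.sqrt_pos.mpr h
    rcases le_or_gt x 0 with hx0 | hx0
    · have hone : 1 ≤ Real.sqrt (1 - x) := Real.one_le_sqrt.mpr (by linarith)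
      have key : 1 / (Real.sqrt (1 - x) * Real.sqrt (1 + x)) ≤ (Real.sqrt (1 + x))⁻¹ := by
        rw [← one_div (Real.sqrt (1 + x))]
        apply one_div_le_one_div_of_le htp
        nlinarith
      have : (0:ℝ) ≤ (Real.sqrt (1 - x))⁻¹ := by positivity
      linarith
    · have hone : 1 ≤ Real.sqrt (1 + x) := Real.one_le_sqrt.mpr (by linarith)
      have key : 1 / (Real.sqrt (1 - x) * Real.sqrt (1 + x)) ≤ (Real.sqrt (1 - x))⁻¹ := by
        rw [← one_div (Real.sqrt (1 - x))]
        apply one_div_le_one_div_of_le hsp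
        nlinarith
      have : (0:ℝ) ≤ (Real.sqrt (1 + x))⁻¹ := by positivity
      linarith

lemma ii_master (g : ℝ → ℝ) (hg : Continuous g) :
    IntervalIntegrable (fun x => g x / (π * Real.sqrt (1 - x ^ 2))) volume (-1) 1 := by
  have heq : (fun x : ℝ => g x / (π * Real.sqrt (1 - x ^ 2)))
      = fun x => (g x / π) * (1 / Real.sqrt (1 - x ^ 2)) := by
    funext x; ring
  rw [heq]
  apply IntegrableOn.intervalIntegrable
  rw [Set.uIcc_of_le (by norm_num : (-1:ℝ) ≤ 1)]
  exact IntegrableOn.continuousOn_mul (hg.div_const π).continuousOn intOn_inv_sqrt isCompact_Icc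

lemma integral_cos_arccos (r : ℤ) :
    (∫ x in (-1:ℝ)..1, Real.cos (r * Real.arccos x) / (π * Real.sqrt (1 - x ^ 2)))
      = if r = 0 then 1 else 0 := by
  have hcont : Continuous fun x : ℝ => Real.cos (r * Real.arccos x) :=
    Real.continuous_cos.comp (continuous_const.mul Real.continuous_arccos)
  have hii := ii_master _ hcont
  by_cases hr : r = 0
  · subst hr
    simp only [Int.cast_zero, zero_mul, Real.cos_zero, if_true]
    have h1 : (∫ x in (-1:ℝ)..1, 1 / (π * Real.sqrt (1 - x ^ 2)))
        = (1/π) * ∫ x in (-1:ℝ)..1, 1 / Real.sqrt (1 - x ^ 2) := by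
      rw [← intervalIntegral.integral_const_mul]
      congr 1; funext x; ring
    rw [h1]
    have h2 : (∫ x in (-1:ℝ)..1, 1 / Real.sqrt (1 - x ^ 2)) = π := by
      have := intervalIntegral.integral_eq_sub_of_hasDerivAt_of_le (f := Real.arcsin)
        (f' := fun x => 1 / Real.sqrt (1 - x ^ 2)) (by norm_num : (-1:ℝ) ≤ 1)
        Real.continuous_arcsin.continuousOn
        (fun x hx => Real.hasDerivAt_arcsin (ne_of_gt hx.1) (ne_of_lt hx.2))
        (by apply IntegrableOn.intervalIntegrable
            rw [Set.uIcc_of_le (by norm_num : (-1:ℝ) ≤ 1)]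
            exact intOn_inv_sqrt)
      rw [this, Real.arcsin_one, Real.arcsin_neg_one]
      ring
    rw [h2]
    field_simp
  · simp only [hr, if_false]
    have hrR : (r : ℝ) ≠ 0 := Int.cast_ne_zero.mpr hr
    have hderiv : ∀ x ∈ Set.Ioo (-1:ℝ) 1,
        HasDerivAt (fun x : ℝ => -(Real.sin (r * Real.arccos x)) / r / π)
          (Real.cos (r * Real.arccos x) / (π * Real.sqrt (1 - x ^ 2))) x := by
      intro x hx
      have h1 : HasDerivAt (fun x : ℝ => (r : ℝ) * Real.arccos x)
          ((r:ℝ) * -(1 / Real.sqrt (1 - x ^ 2))) x :=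
        (Real.hasDerivAt_arccos (ne_of_gt hx.1) (ne_of_lt hx.2)).const_mul _
      have hD := ((h1.sin.neg).div_const (r:ℝ)).div_const π
      have hs0 : Real.sqrt (1 - x ^ 2) ≠ 0 := by
        have h2 : (0:ℝ) < 1 - x ^ 2 := by nlinarith [hx.1, hx.2]
        exact ne_of_gt (Real.sqrt_pos.mpr h2)
      refine hD.congr_deriv ?_
      field_simp [hrR, hs0]
    have hFTC := intervalIntegral.integral_eq_sub_of_hasDerivAt_of_le
      (by norm_num : (-1:ℝ) ≤ 1)
      ((((Real.continuous_sin.comp (continuous_const.mul Real.continuous_arccos)).neg.div_const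
        (r:ℝ)).div_const π).continuousOn)
      hderiv hii
    rw [hFTC]
    simp [Function.comp, Real.arccos_one, Real.arccos_neg_one, Real.sin_int_mul_pi]

noncomputable def cQ (d0 d1 : ℝ) (j : ℤ) : ℝ := if j = 0 then d1/4 else if j = 1 ∨ j = -1 then d0/2 else d1/8

noncomputable def limB (d0 d1 : ℝ) : ℕ → ℤ → ℝ
  | 0, r => if r = 0 then 1 else 0
  | (k+1), r => ∑ j ∈ Finset.Icc (-2:ℤ) 2, cQ d0 d1 j * limB d0 d1 k (r - j)

lemma Icc_expand : Finset.Icc (-2:ℤ) 2 = {-2,-1,0,1,2} := rfl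

lemma cos_recur (d0 d1 x : ℝ) (hx : x ∈ Set.Icc (-1:ℝ) 1) (r : ℤ) :
    (d1/2*x^2 + d0*x) * Real.cos (r * Real.arccos x)
      = ∑ j ∈ Finset.Icc (-2:ℤ) 2, cQ d0 d1 j * Real.cos ((r - j) * Real.arccos x) := by
  set θ := Real.arccos x with hθ
  have hcos : Real.cos θ = x := Real.cos_arccos hx.1 hx.2
  have step : ∀ s : ℝ, Real.cos ((s+1) * θ) + Real.cos ((s-1) * θ) = 2 * x * Real.cos (s * θ) := by
    intro s
    have e1 : (s+1) * θ = s*θ + θ := by ring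
    have e2 : (s-1) * θ = s*θ - θ := by ring
    rw [e1, e2, Real.cos_add, Real.cos_sub, hcos]
    ring
  have h1 := step (r : ℝ)
  have h2 := step ((r : ℝ)+1)
  have h3 := step ((r : ℝ)-1)
  rw [Icc_expand]
  simp only [Finset.mem_insert, Finset.mem_singleton, Finset.sum_insert, Finset.sum_singleton, cQ]
  norm_num
  ring_nf at h1 h2 h3 ⊢
  linear_combination (-(d0/2) - d1*x/4) * h1 + (-(d1/8)) * h2 + (-(d1/8)) * h3

lemma cont_aux (d0 d1 : ℝ) (k : ℕ) (s : ℝ) :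
    Continuous (fun x : ℝ => (d1/2*x^2 + d0*x)^k * Real.cos (s * Real.arccos x)) :=
  (((continuous_const.mul (continuous_pow 2)).add (continuous_const.mul continuous_id)).pow k).mul
    (Real.continuous_cos.comp (continuous_const.mul Real.continuous_arccos))

lemma chebJ_eq (d0 d1 : ℝ) : ∀ (k : ℕ) (r : ℤ),
    (∫ x in (-1:ℝ)..1,
        (d1/2*x^2 + d0*x)^k * Real.cos (r * Real.arccos x) / (π * Real.sqrt (1 - x^2)))
      = limB d0 d1 k r := by
  intro k
  induction k with
  | zero =>
    intro r
    simp only [pow_zero, one_mul]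
    rw [integral_cos_arccos]
    rfl
  | succ k ih =>
    intro r
    have hcong : Set.EqOn
        (fun x => (d1/2*x^2 + d0*x)^(k+1) * Real.cos (r * Real.arccos x) / (π * Real.sqrt (1 - x^2)))
        (fun x => ∑ j ∈ Finset.Icc (-2:ℤ) 2, cQ d0 d1 j *
            ((d1/2*x^2 + d0*x)^k * Real.cos ((r-j) * Real.arccos x) / (π * Real.sqrt (1 - x^2))))
        (Set.uIcc (-1:ℝ) 1) := by
      intro x hx
      rw [Set.uIcc_of_le (by norm_num : (-1:ℝ) ≤ 1)] at hx
      have h5 := cos_recur d0 d1 x hx r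
      have hnum : (d1/2*x^2 + d0*x)^(k+1) * Real.cos (r * Real.arccos x)
          = ∑ j ∈ Finset.Icc (-2:ℤ) 2, cQ d0 d1 j *
              ((d1/2*x^2 + d0*x)^k * Real.cos ((r-j) * Real.arccos x)) := by
        calc (d1/2*x^2 + d0*x)^(k+1) * Real.cos (r * Real.arccos x)
            = (d1/2*x^2 + d0*x)^k * ((d1/2*x^2 + d0*x) * Real.cos (r * Real.arccos x)) := by
              rw [pow_succ]; ring
          _ = (d1/2*x^2 + d0*x)^k * ∑ j ∈ Finset.Icc (-2:ℤ) 2, cQ d0 d1 j *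
                Real.cos ((r-j) * Real.arccos x) := by rw [h5]
          _ = _ := by rw [Finset.mul_sum]; exact Finset.sum_congr rfl fun j _ => by ring
      show (d1/2*x^2 + d0*x)^(k+1) * Real.cos (r * Real.arccos x) / (π * Real.sqrt (1 - x^2)) = _
      rw [hnum, Finset.sum_div]
      exact Finset.sum_congr rfl fun j _ => by rw [mul_div_assoc]
    rw [intervalIntegral.integral_congr hcong,
      intervalIntegral.integral_finset_sum
        (fun (j : ℤ) _ => (ii_master _ (cont_aux d0 d1 k ((r:ℝ) - (j:ℝ)))).const_mul (cQ d0 d1 j))]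
    simp only [intervalIntegral.integral_const_mul]
    show _ = limB d0 d1 (k+1) r
    rw [limB]
    refine Finset.sum_congr rfl fun j _ => ?_
    have h := ih (r - j)
    push_cast at h
    rw [h]

lemma limit_value (d0 d1 : ℝ) (k : ℕ) :
    (∫ x in (-1:ℝ)..1, (d1/2*x^2 + d0*x)^k / (π * Real.sqrt (1 - x^2)))
      = limB d0 d1 k 0 := by
  rw [← chebJ_eq d0 d1 k 0]
  congr 1
  funext x
  norm_num

lemma tendsto_moments
    (d0 d1 : ℝ) (W : ℝ → ℝ)
    (hWint : MeasureTheory.IntegrableOn W (Set.Icc (-1 : ℝ) 1))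
    (P : ℕ → Polynomial ℝ)
    (horth : ∀ n m : ℕ,
      (∫ x in (-1 : ℝ)..1, (P n).eval x * (P m).eval x * W x)
        = if n = m then 1 else 0)
    (u : ℕ → ℤ → ℝ)
    (hrec : ∀ (n : ℕ) (x : ℝ),
      (d1 / 2 * x ^ 2 + d0 * x) * (P n).eval x
        = ∑ j ∈ (Finset.Icc (-2 : ℤ) 2).filter (fun j => 0 ≤ (n : ℤ) + j),
            u n j * (P ((n : ℤ) + j).toNat).eval x)
    (hu0 : Tendsto (fun n : ℕ => u n 0) atTop (𝓝 (d1 / 4)))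
    (hu1 : Tendsto (fun n : ℕ => u n 1) atTop (𝓝 (d0 / 2)))
    (hu1' : Tendsto (fun n : ℕ => u n (-1)) atTop (𝓝 (d0 / 2)))
    (hu2 : Tendsto (fun n : ℕ => u n 2) atTop (𝓝 (d1 / 8)))
    (hu2' : Tendsto (fun n : ℕ => u n (-2)) atTop (𝓝 (d1 / 8))) :
    ∀ (k : ℕ) (r : ℤ), Tendsto (fun n : ℕ => ∫ x in (-1:ℝ)..1,
        (d1 / 2 * x ^ 2 + d0 * x) ^ k * (P n).eval x * (P ((n:ℤ)+r).toNat).eval x * W x) atTop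
      (𝓝 (limB d0 d1 k r)) := by
  have hInt : ∀ g : ℝ → ℝ, Continuous g →
      IntervalIntegrable (fun x => g x * W x) MeasureTheory.volume (-1) 1 := by
    intro g hg
    apply MeasureTheory.IntegrableOn.intervalIntegrable
    rw [Set.uIcc_of_le (by norm_num : (-1:ℝ) ≤ 1)]
    exact MeasureTheory.IntegrableOn.continuousOn_mul hg.continuousOn hWint isCompact_Icc
  have hQcont : Continuous (fun x : ℝ => d1 / 2 * x ^ 2 + d0 * x) :=
    (continuous_const.mul (continuous_pow 2)).add (continuous_const.mul continuous_id)
  have hbrec : ∀ (k : ℕ) (n m : ℕ),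
      (∫ x in (-1:ℝ)..1,
        (d1 / 2 * x ^ 2 + d0 * x) ^ (k+1) * (P n).eval x * (P m).eval x * W x)
      = ∑ j ∈ (Finset.Icc (-2 : ℤ) 2).filter (fun j => 0 ≤ (n : ℤ) + j),
          u n j * ∫ x in (-1:ℝ)..1,
            (d1 / 2 * x ^ 2 + d0 * x) ^ k * (P ((n:ℤ)+j).toNat).eval x * (P m).eval x * W x := by
    intro k n m
    have key : (fun x : ℝ => (d1 / 2 * x ^ 2 + d0 * x) ^ (k+1) * (P n).eval x * (P m).eval x * W x)
        = fun x => ∑ j ∈ (Finset.Icc (-2 : ℤ) 2).filter (fun j => 0 ≤ (n : ℤ) + j),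
            u n j * ((d1 / 2 * x ^ 2 + d0 * x) ^ k * (P ((n:ℤ)+j).toNat).eval x
              * (P m).eval x * W x) := by
      funext x
      calc (d1 / 2 * x ^ 2 + d0 * x) ^ (k+1) * (P n).eval x * (P m).eval x * W x
          = ((d1 / 2 * x ^ 2 + d0 * x) * (P n).eval x)
            * ((d1 / 2 * x ^ 2 + d0 * x) ^ k * (P m).eval x * W x) := by rw [pow_succ]; ring
        _ = (∑ j ∈ (Finset.Icc (-2 : ℤ) 2).filter (fun j => 0 ≤ (n : ℤ) + j),
              u n j * (P ((n : ℤ) + j).toNat).eval x)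
            * ((d1 / 2 * x ^ 2 + d0 * x) ^ k * (P m).eval x * W x) := by rw [hrec n x]
        _ = _ := by rw [Finset.sum_mul]; exact Finset.sum_congr rfl fun j _ => by ring
    rw [key, intervalIntegral.integral_finset_sum
      (fun (j : ℤ) _ => (hInt (fun x => (d1 / 2 * x ^ 2 + d0 * x) ^ k * (P ((n:ℤ)+j).toNat).eval x * (P m).eval x) (((hQcont.pow k).mul (Polynomial.continuous _)).mul
        (Polynomial.continuous _))).const_mul (u n j))]
    simp only [intervalIntegral.integral_const_mul]
  intro k
  induction k with
  | zero =>
    intro r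
    have hval : ∀ n : ℕ, (∫ x in (-1:ℝ)..1,
        (d1 / 2 * x ^ 2 + d0 * x) ^ 0 * (P n).eval x * (P ((n:ℤ)+r).toNat).eval x * W x)
        = if n = ((n:ℤ)+r).toNat then 1 else 0 := by
      intro n
      simpa using horth n ((n:ℤ)+r).toNat
    by_cases hr : r = 0
    · subst hr
      have : ∀ n : ℕ, (∫ x in (-1:ℝ)..1,
          (d1 / 2 * x ^ 2 + d0 * x) ^ 0 * (P n).eval x * (P ((n:ℤ)+0).toNat).eval x * W x)
          = 1 := by
        intro n
        rw [hval n]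
        simp
      rw [show limB d0 d1 0 0 = 1 from by rw [limB]; norm_num]
      exact Tendsto.congr (fun n => (this n).symm) tendsto_const_nhds
    · have heq : (fun n : ℕ => ∫ x in (-1:ℝ)..1,
          (d1 / 2 * x ^ 2 + d0 * x) ^ 0 * (P n).eval x * (P ((n:ℤ)+r).toNat).eval x * W x)
          =ᶠ[atTop] fun _ => (0:ℝ) := by
        filter_upwards [eventually_ge_atTop (r.natAbs + 1)] with n hn
        rw [hval n, if_neg (by omega)]
      rw [show limB d0 d1 0 r = 0 from by rw [limB]; simp [hr]]
      exact Tendsto.congr' heq.symm tendsto_const_nhds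
  | succ k ih =>
    intro r
    have heq : (fun n : ℕ => ∫ x in (-1:ℝ)..1,
        (d1 / 2 * x ^ 2 + d0 * x) ^ (k+1) * (P n).eval x * (P ((n:ℤ)+r).toNat).eval x * W x)
        =ᶠ[atTop] fun n : ℕ => ∑ j ∈ Finset.Icc (-2 : ℤ) 2,
          u n j * ∫ x in (-1:ℝ)..1,
            (d1 / 2 * x ^ 2 + d0 * x) ^ k * (P ((n:ℤ)+j).toNat).eval x
              * (P ((n:ℤ)+r).toNat).eval x * W x := by
      filter_upwards [eventually_ge_atTop 2] with n hn
      rw [hbrec k n _, Finset.filter_true_of_mem]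
      intro j hj
      rw [Finset.mem_Icc] at hj
      omega
    apply Tendsto.congr' heq.symm
    rw [show limB d0 d1 (k+1) r
        = ∑ j ∈ Finset.Icc (-2:ℤ) 2, cQ d0 d1 j * limB d0 d1 k (r - j) from by rw [limB]]
    apply tendsto_finset_sum
    intro j hj
    rw [Finset.mem_Icc] at hj
    have hcj : Tendsto (fun n : ℕ => u n j) atTop (𝓝 (cQ d0 d1 j)) := by
      obtain ⟨hj1, hj2⟩ := hj
      interval_cases j
      · simpa [cQ] using hu2'
      · simpa [cQ] using hu1'
      · simpa [cQ] using hu0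
      · simpa [cQ] using hu1
      · simpa [cQ] using hu2
    have hshift : Tendsto (fun n : ℕ => ((n:ℤ)+j).toNat) atTop atTop := by
      rw [tendsto_atTop_atTop]
      intro m
      exact ⟨m + 2, fun n hn => by omega⟩
    have h2 := (ih (r - j)).comp hshift
    have heq2 : (fun n : ℕ => ∫ x in (-1:ℝ)..1,
        (d1 / 2 * x ^ 2 + d0 * x) ^ k * (P (((n:ℤ)+j).toNat)).eval x
          * (P (((((n:ℤ)+j).toNat : ℕ):ℤ) + (r - j)).toNat).eval x * W x)
        =ᶠ[atTop] fun n : ℕ => ∫ x in (-1:ℝ)..1,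
        (d1 / 2 * x ^ 2 + d0 * x) ^ k * (P (((n:ℤ)+j).toNat)).eval x
          * (P ((n:ℤ)+r).toNat).eval x * W x := by
      filter_upwards [eventually_ge_atTop 2] with n hn
      have : (((((n:ℤ)+j).toNat : ℕ):ℤ) + (r - j)).toNat = ((n:ℤ)+r).toNat := by omega
      rw [this]
    exact hcj.mul (Tendsto.congr' heq2 h2)

theorem Qmoments_of_orthonormal_system_tendsto_arcsine
    (d0 d1 : ℝ)
    (W : ℝ → ℝ)
    (hWpos : ∀ x ∈ Set.Icc (-1 : ℝ) 1, 0 ≤ W x)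
    (hWint : MeasureTheory.IntegrableOn W (Set.Icc (-1 : ℝ) 1))
    (P : ℕ → Polynomial ℝ)
    (horth : ∀ n m : ℕ,
      (∫ x in (-1 : ℝ)..1, (P n).eval x * (P m).eval x * W x)
        = if n = m then 1 else 0)
    (u : ℕ → ℤ → ℝ)
    (hrec : ∀ (n : ℕ) (x : ℝ),
      (d1 / 2 * x ^ 2 + d0 * x) * (P n).eval x
        = ∑ j ∈ (Finset.Icc (-2 : ℤ) 2).filter (fun j => 0 ≤ (n : ℤ) + j),
            u n j * (P ((n : ℤ) + j).toNat).eval x)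
    (hu0 : Tendsto (fun n : ℕ => u n 0) atTop (𝓝 (d1 / 4)))
    (hu1 : Tendsto (fun n : ℕ => u n 1) atTop (𝓝 (d0 / 2)))
    (hu1' : Tendsto (fun n : ℕ => u n (-1)) atTop (𝓝 (d0 / 2)))
    (hu2 : Tendsto (fun n : ℕ => u n 2) atTop (𝓝 (d1 / 8)))
    (hu2' : Tendsto (fun n : ℕ => u n (-2)) atTop (𝓝 (d1 / 8)))
    (k : ℕ) :
    Tendsto
      (fun n : ℕ =>
        ∫ x in (-1 : ℝ)..1, (d1 / 2 * x ^ 2 + d0 * x) ^ k * ((P n).eval x) ^ 2 * W x)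
      atTop
      (𝓝 (∫ x in (-1 : ℝ)..1,
        (d1 / 2 * x ^ 2 + d0 * x) ^ k / (π * Real.sqrt (1 - x ^ 2)))) := by
  have H := tendsto_moments d0 d1 W hWint P horth u hrec hu0 hu1 hu1' hu2 hu2' k 0
  rw [limit_value d0 d1 k]
  apply Tendsto.congr _ H
  intro n
  have hn : ((n:ℤ)+0).toNat = n := by omega
  rw [hn]
  congr 1
  funext x
  ring
end
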